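/- arXiv:2005.02812 — 3 statements merged into one kernel-verified Lean document; each statement's English description precedes it below -/
import Mathlib

section
/- Let λ ∈ (0,1) and let (f_n)_{n∈ℤ} be the densities of the type-III_λ construction: f_n ≡ 1 for n ≤ 1 and, for n ≥ 2, f_n = λ on A_n, λ⁻¹ on B_n, 1 elsewhere, where A_n, B_n are disjoint decreasing intervals with |A_n| = a_n = λ⁻¹|B_n| and a_n = 1/((n+4)log(n+4)). Then ∑_{n∈ℤ} ∫₀¹ (√f_n(u) − √f_{n−1}(u))² du < ∞. -/
open MeasureTheory

noncomputable def bfun : ℕ → ℝ := fun k => 1 / (((k : ℝ) + 4) * Real.log ((k : ℝ) + 4))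

lemma bfun_pos_denom (k : ℕ) : 0 < ((k : ℝ) + 4) * Real.log ((k : ℝ) + 4) := by
  have h1 : (0:ℝ) < (k : ℝ) + 4 := by positivity
  have h2 : (1:ℝ) < (k : ℝ) + 4 := by
    have : (0:ℝ) ≤ (k : ℝ) := Nat.cast_nonneg k
    linarith
  exact mul_pos h1 (Real.log_pos h2)

lemma bfun_nonneg (k : ℕ) : 0 ≤ bfun k := by
  unfold bfun
  exact le_of_lt (by exact one_div_pos.mpr (bfun_pos_denom k))

lemma bfun_antitone : Antitone bfun := by
  intro j k hjk
  unfold bfun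
  have h1 : ((j : ℝ) + 4) ≤ (k : ℝ) + 4 := by
    have : (j:ℝ) ≤ k := Nat.cast_le.2 hjk
    linarith
  have h2 : Real.log ((j : ℝ) + 4) ≤ Real.log ((k : ℝ) + 4) :=
    Real.log_le_log (by positivity) h1
  exact one_div_le_one_div_of_le (bfun_pos_denom j)
    (mul_le_mul h1 h2 (Real.log_nonneg (by
      have : (0:ℝ) ≤ (j:ℝ) := Nat.cast_nonneg j
      linarith)) (by positivity))

lemma summable_bfun_diff : Summable (fun k : ℕ => bfun k - bfun (k + 1)) := by
  apply summable_of_sum_range_le (c := bfun 0)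
  · intro n
    have := bfun_antitone (Nat.le_succ n)
    linarith
  · intro n
    rw [Finset.sum_range_sub' bfun]
    have := bfun_nonneg n
    linarith

open Classical in
lemma gsum (c C : ℝ) :
    Summable (fun n : ℤ => if n ≤ 1 then (0:ℝ) else if n = 2 then c
      else C * (bfun (n.toNat - 1) - bfun n.toNat)) := by
  apply Summable.of_nat_of_neg
  · have he : (fun n : ℕ => if (n:ℤ) ≤ 1 then (0:ℝ) else if (n:ℤ) = 2 then c
        else C * (bfun ((n:ℤ).toNat - 1) - bfun (n:ℤ).toNat))
        = fun n : ℕ => if n ≤ 1 then (0:ℝ) else if n = 2 then c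
        else C * (bfun (n - 1) - bfun n) := by
      funext n
      have h1 : ((n:ℤ) ≤ 1) ↔ (n ≤ 1) := by omega
      have h2 : ((n:ℤ) = 2) ↔ (n = 2) := by omega
      have h3 : ((n:ℤ)).toNat = n := by omega
      rw [h3]
      by_cases hn1 : n ≤ 1
      · rw [if_pos (h1.mpr hn1), if_pos hn1]
      · rw [if_neg (fun h => hn1 (h1.mp h)), if_neg hn1]
        by_cases hn2 : n = 2
        · rw [if_pos (h2.mpr hn2), if_pos hn2]
        · rw [if_neg (fun h => hn2 (h2.mp h)), if_neg hn2]
    rw [he, ← summable_nat_add_iff 3]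
    have he2 : (fun n : ℕ => if n + 3 ≤ 1 then (0:ℝ) else if n + 3 = 2 then c
        else C * (bfun (n + 3 - 1) - bfun (n + 3)))
        = fun n : ℕ => C * (bfun (n + 2) - bfun (n + 2 + 1)) := by
      funext n
      rw [if_neg (by omega), if_neg (by omega)]
      congr 2 <;> omega
    rw [he2]
    exact ((summable_nat_add_iff 2).2 summable_bfun_diff).mul_left C
  · have he : (fun n : ℕ => if (-(n:ℤ)) ≤ 1 then (0:ℝ) else if (-(n:ℤ)) = 2 then c
        else C * (bfun ((-(n:ℤ)).toNat - 1) - bfun (-(n:ℤ)).toNat)) = fun _ => (0:ℝ) := by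
      funext n
      rw [if_pos (by omega)]
    rw [he]
    exact summable_zero

open Classical in
/-- Kakutani square-root summability for the type-IIIλ densities:
`∑_{n ∈ ℤ} ∫₀¹ (√f_n - √f_{n-1})² du < ∞`. -/
theorem stmt8 (l : ℝ) (hl : l ∈ Set.Ioo (0 : ℝ) 1)
    (a : ℕ → ℝ) (ha : ∀ n : ℕ, 2 ≤ n → a n = 1 / ((n + 4) * Real.log (n + 4)))
    (A B : ℕ → Set ℝ)
    (hAint : ∀ n, 2 ≤ n → ∃ p q : ℝ, A n = Set.Ioo p q)
    (hBint : ∀ n, 2 ≤ n → ∃ p q : ℝ, B n = Set.Ioo p q)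
    (hAsub : ∀ n, 2 ≤ n → A n ⊆ Set.Icc 0 1)
    (hBsub : ∀ n, 2 ≤ n → B n ⊆ Set.Icc 0 1)
    (hdisj : ∀ m n, 2 ≤ m → 2 ≤ n → Disjoint (A m) (B n))
    (hAdec : ∀ n, 2 ≤ n → A (n + 1) ⊆ A n)
    (hBdec : ∀ n, 2 ≤ n → B (n + 1) ⊆ B n)
    (hvolA : ∀ n, 2 ≤ n → volume (A n) = ENNReal.ofReal (a n))
    (hvolB : ∀ n, 2 ≤ n → volume (B n) = ENNReal.ofReal (l * a n))
    (f : ℤ → ℝ → ℝ)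
    (hf1 : ∀ n : ℤ, n ≤ 1 → ∀ u, f n u = 1)
    (hf2 : ∀ n : ℤ, 2 ≤ n → ∀ u,
      f n u = if u ∈ A n.toNat then l else if u ∈ B n.toNat then l⁻¹ else 1) :
    Summable (fun n : ℤ =>
      ∫ u in Set.Icc (0 : ℝ) 1, (Real.sqrt (f n u) - Real.sqrt (f (n - 1) u)) ^ 2) := by
  obtain ⟨hl0, hl1⟩ := hl
  have hinv0 : (0:ℝ) ≤ l⁻¹ := inv_nonneg.2 hl0.le
  have hinv1 : (1:ℝ) ≤ l⁻¹ := by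
    rw [le_inv_comm₀ one_pos hl0]
    simpa using hl1.le
  -- values of f are in [0, l⁻¹]
  have hval : ∀ n u, 0 ≤ f n u ∧ f n u ≤ l⁻¹ := by
    intro n u
    rcases le_or_gt n 1 with h | h
    · rw [hf1 n h u]; exact ⟨zero_le_one, hinv1⟩
    · rw [hf2 n h u]
      split_ifs
      · exact ⟨hl0.le, le_trans hl1.le hinv1⟩
      · exact ⟨hinv0, le_refl _⟩
      · exact ⟨zero_le_one, hinv1⟩
  -- pointwise bound on the integrand
  have hpt : ∀ n m u, ‖(Real.sqrt (f n u) - Real.sqrt (f m u)) ^ 2‖ ≤ l⁻¹ := by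
    intro n m u
    rw [Real.norm_of_nonneg (sq_nonneg _)]
    have h1 := hval n u
    have h2 := hval m u
    have s1 : Real.sqrt (f n u) ≤ Real.sqrt l⁻¹ := Real.sqrt_le_sqrt h1.2
    have s2 : Real.sqrt (f m u) ≤ Real.sqrt l⁻¹ := Real.sqrt_le_sqrt h2.2
    have hq : Real.sqrt l⁻¹ ^ 2 = l⁻¹ := Real.sq_sqrt hinv0
    nlinarith [Real.sqrt_nonneg (f n u), Real.sqrt_nonneg (f m u)]
  refine Summable.of_norm_bounded (gsum l⁻¹ (l⁻¹ * (1 + l))) ?_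
  intro n
  rcases le_or_gt n 1 with hn1 | hn1
  · -- all densities are 1, integrand vanishes
    rw [if_pos hn1]
    have hz : (fun u => (Real.sqrt (f n u) - Real.sqrt (f (n - 1) u)) ^ 2)
        = fun _ => (0:ℝ) := by
      funext u
      rw [hf1 n hn1 u, hf1 (n - 1) (by omega) u]
      simp
    rw [hz, integral_zero, norm_zero]
  · rw [if_neg (by omega)]
    rcases eq_or_lt_of_le (show (2:ℤ) ≤ n by omega) with hn2 | hn2
    · -- n = 2 : crude bound by l⁻¹
      rw [if_pos (by omega)]
      have hb := norm_setIntegral_le_of_norm_le_const (μ := volume)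
        (s := Set.Icc (0:ℝ) 1) (C := l⁻¹) measure_Icc_lt_top
        (fun x _ => hpt n (n - 1) x)
      rw [measureReal_def] at hb
      have hv : (volume (Set.Icc (0:ℝ) 1)).toReal = 1 := by
        rw [Real.volume_Icc]
        norm_num
      rw [hv, mul_one] at hb
      exact hb
    · -- main case n ≥ 3
      rw [if_neg (by omega)]
      have hn0 : (0:ℤ) ≤ n := by omega
      lift n to ℕ using hn0
      have hk3 : 3 ≤ n := by exact_mod_cast hn2
      set k' : ℕ := n - 1 with hk'
      have hk'2 : 2 ≤ k' := by omega
      have hn2' : 2 ≤ n := by omega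
      have htn : ((n:ℤ)).toNat = n := by omega
      have htn' : (((n:ℤ)) - 1).toNat = k' := by omega
      have hk'succ : k' + 1 = n := by omega
      -- formulas for f
      have eA : ∀ u, f (n:ℤ) u = if u ∈ A n then l else if u ∈ B n then l⁻¹ else 1 := by
        intro u
        have := hf2 (n:ℤ) (by exact_mod_cast hn2') u
        rwa [htn] at this
      have eB : ∀ u, f ((n:ℤ) - 1) u
          = if u ∈ A k' then l else if u ∈ B k' then l⁻¹ else 1 := by
        intro u
        have := hf2 ((n:ℤ) - 1) (by omega) u
        rwa [htn'] at this
      set D : Set ℝ := (A k' \ A n) ∪ (B k' \ B n) with hD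
      have hAsubk : A n ⊆ A k' := by
        have := hAdec k' hk'2
        rwa [hk'succ] at this
      have hBsubk : B n ⊆ B k' := by
        have := hBdec k' hk'2
        rwa [hk'succ] at this
      -- outside D the integrand vanishes
      have hzero : ∀ u, u ∉ D → (Real.sqrt (f (n:ℤ) u) - Real.sqrt (f ((n:ℤ) - 1) u)) ^ 2 = 0 := by
        intro u hu
        have huA : u ∈ A k' → u ∈ A n := by
          intro h
          by_contra hc
          exact hu (Or.inl ⟨h, hc⟩)
        have huB : u ∈ B k' → u ∈ B n := by
          intro h
          by_contra hc
          exact hu (Or.inr ⟨h, hc⟩)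
        rw [eA u, eB u]
        by_cases h1 : u ∈ A n
        · have h1' : u ∈ A k' := hAsubk h1
          simp [h1, h1']
        · have h1' : u ∉ A k' := fun h => h1 (huA h)
          by_cases h2 : u ∈ B n
          · have h2' : u ∈ B k' := hBsubk h2
            simp [h1, h1', h2, h2']
          · have h2' : u ∉ B k' := fun h => h2 (huB h)
            simp [h1, h1', h2, h2']
      -- measurability of the relevant sets
      have hAmeas : ∀ m, 2 ≤ m → MeasurableSet (A m) := by
        intro m hm
        obtain ⟨p, q, e⟩ := hAint m hm
        rw [e]; exact measurableSet_Ioo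
      have hBmeas : ∀ m, 2 ≤ m → MeasurableSet (B m) := by
        intro m hm
        obtain ⟨p, q, e⟩ := hBint m hm
        rw [e]; exact measurableSet_Ioo
      have hDmeas : MeasurableSet D :=
        (((hAmeas k' hk'2).diff (hAmeas n hn2')).union
          ((hBmeas k' hk'2).diff (hBmeas n hn2')))
      -- restrict the integral to D
      have hre : (∫ u in Set.Icc (0:ℝ) 1,
            (Real.sqrt (f (n:ℤ) u) - Real.sqrt (f ((n:ℤ) - 1) u)) ^ 2)
          = ∫ u in Set.Icc (0:ℝ) 1 ∩ D,
            (Real.sqrt (f (n:ℤ) u) - Real.sqrt (f ((n:ℤ) - 1) u)) ^ 2 := by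
        rw [← setIntegral_indicator hDmeas]
        refine setIntegral_congr_fun measurableSet_Icc (fun u _ => ?_)
        by_cases hDu : u ∈ D
        · rw [Set.indicator_of_mem hDu]
        · rw [Set.indicator_of_notMem hDu]
          exact hzero u hDu
      have hfin : volume (Set.Icc (0:ℝ) 1 ∩ D) < ⊤ :=
        lt_of_le_of_lt (measure_mono Set.inter_subset_left) measure_Icc_lt_top
      have hnorm := norm_setIntegral_le_of_norm_le_const (μ := volume)
        (s := Set.Icc (0:ℝ) 1 ∩ D) (C := l⁻¹) hfin
        (fun x _ => hpt (n:ℤ) ((n:ℤ) - 1) x)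
      -- identify a with bfun
      have ea : ∀ m, 2 ≤ m → a m = bfun m := by
        intro m hm
        rw [ha m hm]
        rfl
      have hbdiff : 0 ≤ bfun k' - bfun n := by
        have := bfun_antitone (show k' ≤ n by omega)
        linarith
      -- measure of D
      have hvolAd : volume (A k' \ A n) = ENNReal.ofReal (bfun k' - bfun n) := by
        rw [measure_diff hAsubk (hAmeas n hn2').nullMeasurableSet
          (by rw [hvolA n hn2']; exact ENNReal.ofReal_ne_top),
          hvolA k' hk'2, hvolA n hn2', ea k' hk'2, ea n hn2',
          ← ENNReal.ofReal_sub _ (bfun_nonneg n)]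
      have hvolBd : volume (B k' \ B n) = ENNReal.ofReal (l * (bfun k' - bfun n)) := by
        rw [measure_diff hBsubk (hBmeas n hn2').nullMeasurableSet
          (by rw [hvolB n hn2']; exact ENNReal.ofReal_ne_top),
          hvolB k' hk'2, hvolB n hn2', ea k' hk'2, ea n hn2',
          ← ENNReal.ofReal_sub _ (mul_nonneg hl0.le (bfun_nonneg n) : (0:ℝ) ≤ l * bfun n)]
        ring_nf
      have hDle : volume (Set.Icc (0:ℝ) 1 ∩ D)
          ≤ ENNReal.ofReal (bfun k' - bfun n) + ENNReal.ofReal (l * (bfun k' - bfun n)) := by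
        refine le_trans (measure_mono Set.inter_subset_right) ?_
        refine le_trans (measure_union_le _ _) ?_
        rw [hvolAd, hvolBd]
      have hvtoReal : (volume (Set.Icc (0:ℝ) 1 ∩ D)).toReal ≤ (1 + l) * (bfun k' - bfun n) := by
        have h1 := ENNReal.toReal_mono (by finiteness) hDle
        rw [ENNReal.toReal_add ENNReal.ofReal_ne_top ENNReal.ofReal_ne_top,
          ENNReal.toReal_ofReal hbdiff,
          ENNReal.toReal_ofReal (mul_nonneg hl0.le hbdiff)] at h1
        linarith
      rw [hre]
      calc ‖∫ u in Set.Icc (0:ℝ) 1 ∩ D,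
            (Real.sqrt (f (n:ℤ) u) - Real.sqrt (f ((n:ℤ) - 1) u)) ^ 2‖
          ≤ l⁻¹ * (volume (Set.Icc (0:ℝ) 1 ∩ D)).toReal := hnorm
        _ ≤ l⁻¹ * ((1 + l) * (bfun k' - bfun n)) :=
            mul_le_mul_of_nonneg_left hvtoReal hinv0
        _ = l⁻¹ * (1 + l) * (bfun ((n:ℤ).toNat - 1) - bfun ((n:ℤ)).toNat) := by
            rw [htn]
            ring
end

section
/- Let λ ∈ (0,1), and suppose A' ⊆ A and B' ⊆ B with A, B, A', B' measurable subsets of [0,1], A ∩ B = ∅. Let f be the density equal to λ on A', λ⁻¹ on B', 1 elsewhere, and g the density equal to λ on A, λ⁻¹ on B, 1 elsewhere, with |A'| = λ⁻¹|B'|, |A| = λ⁻¹|B|. Then ∫₀¹ (f(u)/g(u))² f(u) du = 1 + (λ⁻² − λ + λ(λ² − λ⁻¹))·(|A| − |A'|). -/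
open MeasureTheory

lemma piece_int (F : ℝ → ℝ) (S : Set ℝ) (hS : MeasurableSet S) (c r : ℝ)
    (hvol : volume S = ENNReal.ofReal r) (hr : 0 ≤ r)
    (hF : ∀ u ∈ S, F u = c) :
    IntegrableOn F S volume ∧ (∫ u in S, F u) = c * r := by
  have hfin : volume S < ⊤ := by rw [hvol]; exact ENNReal.ofReal_lt_top
  constructor
  · exact (integrableOn_const hfin.ne).congr_fun
      (fun u hu => (hF u hu).symm) hS
  · rw [setIntegral_congr_fun hS hF, setIntegral_const, measureReal_def, hvol,
      ENNReal.toReal_ofReal hr, smul_eq_mul, mul_comm]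

open Classical in
/-- The key integral identity for the second moment of `1/(Tⁿ)'`:
`∫₀¹ (f/g)² f du = 1 + (λ⁻² - λ + λ(λ² - λ⁻¹)) (|A| - |A'|)`. -/
theorem stmt10 (l : ℝ) (hl : l ∈ Set.Ioo (0 : ℝ) 1)
    (A B A' B' : Set ℝ) (aA aA' : ℝ)
    (hAmeas : MeasurableSet A) (hBmeas : MeasurableSet B)
    (hA'meas : MeasurableSet A') (hB'meas : MeasurableSet B')
    (hAsub : A ⊆ Set.Icc 0 1) (hBsub : B ⊆ Set.Icc 0 1)
    (hA' : A' ⊆ A) (hB' : B' ⊆ B) (hdisj : Disjoint A B)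
    (hvolA : volume A = ENNReal.ofReal aA)
    (hvolA' : volume A' = ENNReal.ofReal aA')
    (hvolB : volume B = ENNReal.ofReal (l * aA))
    (hvolB' : volume B' = ENNReal.ofReal (l * aA'))
    (haA : 0 ≤ aA') (haA' : aA' ≤ aA) (haA1 : (1 + l) * aA < 1)
    (f g : ℝ → ℝ)
    (hfdef : ∀ u, f u = if u ∈ A' then l else if u ∈ B' then l⁻¹ else 1)
    (hgdef : ∀ u, g u = if u ∈ A then l else if u ∈ B then l⁻¹ else 1) :
    (∫ u in Set.Icc (0 : ℝ) 1, (f u / g u) ^ 2 * f u)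
      = 1 + ((l ^ 2)⁻¹ - l + l * (l ^ 2 - l⁻¹)) * (aA - aA') := by
  have hl0 : (0:ℝ) < l := hl.1
  have hlne : l ≠ 0 := ne_of_gt hl0
  have haA0 : 0 ≤ aA := le_trans haA haA'
  set F : ℝ → ℝ := fun u => (f u / g u) ^ 2 * f u with hF
  -- membership lemmas
  have hAB : ∀ u ∈ A, u ∉ B := fun u hu hb => (hdisj.le_bot ⟨hu, hb⟩ : u ∈ (⊥:Set ℝ))
  have hBA : ∀ u ∈ B, u ∉ A := fun u hu ha => (hdisj.le_bot ⟨ha, hu⟩ : u ∈ (⊥:Set ℝ))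
  -- constant values on pieces
  have hP1 : ∀ u ∈ A', F u = l := by
    intro u hu
    have huA : u ∈ A := hA' hu
    simp only [hF, hfdef, hgdef, if_pos hu, if_pos huA]
    field_simp
  have hP2 : ∀ u ∈ A \ A', F u = (1/l)^2 := by
    intro u hu
    have huB' : u ∉ B' := fun h => hAB u hu.1 (hB' h)
    simp only [hF, hfdef, hgdef, if_neg hu.2, if_neg huB', if_pos hu.1]
    ring
  have hP3 : ∀ u ∈ B', F u = l⁻¹ := by
    intro u hu
    have huB : u ∈ B := hB' hu
    have huA : u ∉ A := hBA u huB
    have huA' : u ∉ A' := fun h => huA (hA' h)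
    simp only [hF, hfdef, hgdef, if_neg huA', if_pos hu, if_neg huA, if_pos huB]
    field_simp
  have hP4 : ∀ u ∈ B \ B', F u = l^2 := by
    intro u hu
    have huA : u ∉ A := hBA u hu.1
    have huA' : u ∉ A' := fun h => huA (hA' h)
    simp only [hF, hfdef, hgdef, if_neg huA', if_neg hu.2, if_neg huA, if_pos hu.1]
    field_simp
  have hP5 : ∀ u ∈ Set.Icc (0:ℝ) 1 \ (A ∪ B), F u = 1 := by
    intro u hu
    have huA : u ∉ A := fun h => hu.2 (Or.inl h)
    have huB : u ∉ B := fun h => hu.2 (Or.inr h)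
    have huA' : u ∉ A' := fun h => huA (hA' h)
    have huB' : u ∉ B' := fun h => huB (hB' h)
    simp [hF, hfdef, hgdef, huA, huB, huA', huB']
  -- volumes
  have hAfin : volume A' ≠ ⊤ := by rw [hvolA']; exact ENNReal.ofReal_ne_top
  have hvol2 : volume (A \ A') = ENNReal.ofReal (aA - aA') := by
    rw [measure_diff hA' hA'meas.nullMeasurableSet hAfin, hvolA, hvolA',
      ENNReal.ofReal_sub _ haA]
  have hB'fin : volume B' ≠ ⊤ := by rw [hvolB']; exact ENNReal.ofReal_ne_top
  have hvol4 : volume (B \ B') = ENNReal.ofReal (l * aA - l * aA') := by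
    rw [measure_diff hB' hB'meas.nullMeasurableSet hB'fin, hvolB, hvolB',
      ENNReal.ofReal_sub _ (mul_nonneg hl0.le haA)]
  have hABsub : A ∪ B ⊆ Set.Icc (0:ℝ) 1 := Set.union_subset hAsub hBsub
  have hvolAB : volume (A ∪ B) = ENNReal.ofReal (aA + l * aA) := by
    rw [measure_union hdisj hBmeas, hvolA, hvolB,
      ← ENNReal.ofReal_add haA0 (mul_nonneg hl0.le haA0)]
  have hABfin : volume (A ∪ B) ≠ ⊤ := by rw [hvolAB]; exact ENNReal.ofReal_ne_top
  have hvol5 : volume (Set.Icc (0:ℝ) 1 \ (A ∪ B)) = ENNReal.ofReal (1 - (aA + l * aA)) := by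
    rw [measure_diff hABsub (hAmeas.union hBmeas).nullMeasurableSet hABfin, hvolAB,
      Real.volume_Icc]
    rw [show (1:ℝ) - 0 = 1 by ring, ENNReal.ofReal_sub _ (by nlinarith)]
  have hr5 : 0 ≤ 1 - (aA + l * aA) := by nlinarith
  -- pieces
  have h1 := piece_int F A' hA'meas l aA' hvolA' haA hP1
  have h2 := piece_int F (A \ A') (hAmeas.diff hA'meas) ((1/l)^2) (aA - aA') hvol2
    (by linarith) hP2
  have h3 := piece_int F B' hB'meas l⁻¹ (l * aA') hvolB' (mul_nonneg hl0.le haA) hP3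
  have h4 := piece_int F (B \ B') (hBmeas.diff hB'meas) (l^2) (l * aA - l * aA') hvol4
    (by nlinarith) hP4
  have h5 := piece_int F (Set.Icc (0:ℝ) 1 \ (A ∪ B)) (measurableSet_Icc.diff
    (hAmeas.union hBmeas)) 1 (1 - (aA + l * aA)) hvol5 hr5 hP5
  -- split the integral
  have hsplitA : A = A' ∪ (A \ A') := (Set.union_diff_cancel hA').symm
  have hsplitB : B = B' ∪ (B \ B') := (Set.union_diff_cancel hB').symm
  have hsplitI : Set.Icc (0:ℝ) 1 = (A ∪ B) ∪ (Set.Icc (0:ℝ) 1 \ (A ∪ B)) :=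
    (Set.union_diff_cancel hABsub).symm
  have hiA : IntegrableOn F A volume := by
    rw [hsplitA]; exact h1.1.union h2.1
  have hiB : IntegrableOn F B volume := by
    rw [hsplitB]; exact h3.1.union h4.1
  have hintA : (∫ u in A, F u) = l * aA' + (1/l)^2 * (aA - aA') := by
    rw [hsplitA, setIntegral_union Set.disjoint_sdiff_right (hAmeas.diff hA'meas)
      h1.1 h2.1, h1.2, h2.2]
  have hintB : (∫ u in B, F u) = l⁻¹ * (l * aA') + l^2 * (l * aA - l * aA') := by
    rw [hsplitB, setIntegral_union Set.disjoint_sdiff_right (hBmeas.diff hB'meas)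
      h3.1 h4.1, h3.2, h4.2]
  have hintAB : (∫ u in A ∪ B, F u) = (l * aA' + (1/l)^2 * (aA - aA'))
      + (l⁻¹ * (l * aA') + l^2 * (l * aA - l * aA')) := by
    rw [setIntegral_union hdisj hBmeas hiA hiB, hintA, hintB]
  calc (∫ u in Set.Icc (0:ℝ) 1, F u)
      = (∫ u in A ∪ B, F u) + ∫ u in Set.Icc (0:ℝ) 1 \ (A ∪ B), F u := by
        conv_lhs => rw [hsplitI]
        rw [setIntegral_union Set.disjoint_sdiff_right
          (measurableSet_Icc.diff (hAmeas.union hBmeas)) (hiA.union hiB) h5.1]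
    _ = (l * aA' + (1/l)^2 * (aA - aA')) + (l⁻¹ * (l * aA') + l^2 * (l * aA - l * aA'))
        + 1 * (1 - (aA + l * aA)) := by rw [hintAB, h5.2]
    _ = 1 + ((l ^ 2)⁻¹ - l + l * (l ^ 2 - l⁻¹)) * (aA - aA') := by field_simp; ring
end

section
/- Let (Ω, 𝓕, μ, T) be an invertible nonsingular dynamical system on a probability space, and suppose there exists K > 0 and c > 0 such that ∫_Ω ((d μ∘Tⁿ/dμ))⁻² dμ ≤ K·(log(n+1))^c for all n ≥ 1. Then for μ-almost every x, ∑_{n=1}^∞ (dμ∘Tⁿ/dμ)(x) = ∞. -/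
open MeasureTheory ENNReal

/-- The harmonic series diverges in `ℝ≥0∞`. -/
lemma harm_tsum_top : ∑' k : ℕ, ((k : ℝ≥0∞) + 1)⁻¹ = ⊤ := by
  by_contra h
  have hcoe : ∀ k : ℕ, ((k : ℝ≥0∞) + 1)⁻¹
      = (((((k + 1 : ℕ) : NNReal))⁻¹ : NNReal) : ℝ≥0∞) := by
    intro k
    rw [ENNReal.coe_inv (by exact_mod_cast Nat.succ_ne_zero k)]
    norm_cast
    simp
  rw [tsum_congr hcoe] at h
  have hsum : Summable (fun k : ℕ => (((k + 1 : ℕ) : NNReal))⁻¹) :=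
    ENNReal.tsum_coe_ne_top_iff_summable.mp h
  have hsumR : Summable (fun k : ℕ => (((k + 1 : ℕ) : ℝ))⁻¹) := by
    have := NNReal.summable_coe.mpr hsum
    simpa using this
  have : Summable (fun n : ℕ => ((n : ℝ))⁻¹) := (summable_nat_add_iff 1).mp hsumR
  exact Real.not_summable_natCast_inv this

/-- Summability of the polylog-over-quadratic bound. -/
lemma aux_summable (K c : ℝ) (hK : 0 < K) (hc : 0 < c) :
    Summable (fun n : ℕ => K * Real.log ((n : ℝ) + 2) ^ c / ((n : ℝ) + 1) ^ 2) := by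
  set ε : ℝ := 1 / (2 * c) with hεdef
  have hε : 0 < ε := by positivity
  have hεc : ε * c = 1 / 2 := by
    rw [hεdef, div_mul_eq_mul_div, one_mul, div_eq_div_iff (by positivity) (by norm_num)]
    ring
  set C : ℝ := K * (2 : ℝ) ^ ((1:ℝ)/2) / ε ^ c with hCdef
  have hC : 0 < C := by positivity
  have hg : Summable (fun n : ℕ => ((n : ℝ) + 1) ^ (-(3/2) : ℝ)) := by
    have h1 : Summable (fun n : ℕ => ((n : ℝ)) ^ (-(3/2) : ℝ)) :=
      Real.summable_nat_rpow.mpr (by norm_num)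
    have h2 := (summable_nat_add_iff 1).mpr h1
    simpa using h2
  refine Summable.of_nonneg_of_le (fun n => ?_) (fun n => ?_) (hg.mul_left C)
  · have hl : (0:ℝ) ≤ Real.log ((n : ℝ) + 2) :=
      Real.log_nonneg (by linarith [Nat.cast_nonneg (α := ℝ) n])
    have : (0:ℝ) ≤ Real.log ((n : ℝ) + 2) ^ c := Real.rpow_nonneg hl c
    positivity
  set x : ℝ := (n : ℝ) + 2 with hxdef
  have hx1 : (1 : ℝ) ≤ x := by simp [hxdef]; linarith [Nat.cast_nonneg (α := ℝ) n]
  have hx0 : (0 : ℝ) < x := by linarith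
  have hlog0 : 0 ≤ Real.log x := Real.log_nonneg hx1
  have hlog : Real.log x ≤ x ^ ε / ε := Real.log_le_rpow_div hx0.le hε
  have hstep1 : Real.log x ^ c ≤ x ^ ((1:ℝ)/2) / ε ^ c := by
    calc Real.log x ^ c ≤ (x ^ ε / ε) ^ c := Real.rpow_le_rpow hlog0 hlog hc.le
      _ = (x ^ ε) ^ c / ε ^ c := Real.div_rpow (Real.rpow_nonneg hx0.le _) hε.le _
      _ = x ^ (ε * c) / ε ^ c := by rw [← Real.rpow_mul hx0.le]
      _ = x ^ ((1:ℝ)/2) / ε ^ c := by rw [hεc]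
  have hstep2 : x ^ ((1:ℝ)/2) ≤ (2:ℝ) ^ ((1:ℝ)/2) * ((n : ℝ) + 1) ^ ((1:ℝ)/2) := by
    have hle : x ≤ 2 * ((n : ℝ) + 1) := by simp [hxdef]; linarith [Nat.cast_nonneg (α := ℝ) n]
    calc x ^ ((1:ℝ)/2) ≤ (2 * ((n : ℝ) + 1)) ^ ((1:ℝ)/2) :=
          Real.rpow_le_rpow hx0.le hle (by norm_num)
      _ = (2:ℝ) ^ ((1:ℝ)/2) * ((n : ℝ) + 1) ^ ((1:ℝ)/2) :=
          Real.mul_rpow (by norm_num) (by positivity)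
  have hnum : K * Real.log x ^ c ≤ C * ((n : ℝ) + 1) ^ ((1:ℝ)/2) := by
    calc K * Real.log x ^ c ≤ K * (x ^ ((1:ℝ)/2) / ε ^ c) := by
          exact mul_le_mul_of_nonneg_left hstep1 hK.le
      _ ≤ K * (((2:ℝ) ^ ((1:ℝ)/2) * ((n : ℝ) + 1) ^ ((1:ℝ)/2)) / ε ^ c) := by
          apply mul_le_mul_of_nonneg_left _ hK.le
          exact div_le_div_of_nonneg_right hstep2 (by positivity)
      _ = C * ((n : ℝ) + 1) ^ ((1:ℝ)/2) := by rw [hCdef]; ring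
  have hpos : (0 : ℝ) < ((n : ℝ) + 1) ^ 2 := by positivity
  calc K * Real.log x ^ c / ((n : ℝ) + 1) ^ 2
      ≤ C * ((n : ℝ) + 1) ^ ((1:ℝ)/2) / ((n : ℝ) + 1) ^ 2 :=
        (div_le_div_iff_of_pos_right hpos).mpr hnum
    _ = C * ((n : ℝ) + 1) ^ (-(3/2) : ℝ) := by
        rw [mul_div_assoc]
        congr 1
        rw [show ((n : ℝ) + 1) ^ 2 = ((n : ℝ) + 1) ^ ((2:ℕ):ℝ) by rw [Real.rpow_natCast],
          ← Real.rpow_sub (by positivity)]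
        norm_num

/-- If the second moments of `1/(Tⁿ)'` grow at most polylogarithmically, then
the Radon–Nikodym sums `∑ₙ (dμ∘Tⁿ/dμ)(x)` diverge almost everywhere. -/
theorem stmt11 {Ω : Type*} [MeasurableSpace Ω] (μ : Measure Ω) [IsProbabilityMeasure μ]
    (T S : Ω → Ω) (hT : Measurable T) (hS : Measurable S)
    (hTS : Function.LeftInverse S T) (hST : Function.RightInverse S T)
    (habs : Measure.map S μ ≪ μ) (habs' : μ ≪ Measure.map S μ)
    (D : ℕ → Ω → ℝ≥0∞)
    (hD : ∀ n : ℕ, D n = (Measure.map (S^[n]) μ).rnDeriv μ)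
    (K c : ℝ) (hK : 0 < K) (hc : 0 < c)
    (hbound : ∀ n : ℕ, 1 ≤ n →
      (∫⁻ x, ((D n x)⁻¹) ^ 2 ∂μ) ≤ ENNReal.ofReal (K * Real.log (n + 1) ^ c)) :
    ∀ᵐ x ∂μ, (∑' n : ℕ, D (n + 1) x) = ⊤ := by
  have hDmeas : ∀ n, Measurable (D n) := by
    intro n; rw [hD n]; exact Measure.measurable_rnDeriv _ _
  set f : ℕ → ℝ := fun n => K * Real.log ((n : ℝ) + 2) ^ c / ((n : ℝ) + 1) ^ 2 with hfdef
  have hf0 : ∀ n, 0 ≤ f n := by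
    intro n
    have : (0:ℝ) ≤ Real.log ((n : ℝ) + 2) := Real.log_nonneg (by linarith [Nat.cast_nonneg (α := ℝ) n])
    positivity
  set B : ℕ → Set Ω := fun n => {x | (((n + 1 : ℕ) : ℝ≥0∞)) ^ 2 ≤ ((D (n + 1) x)⁻¹) ^ 2}
    with hBdef
  have hBle : ∀ n, μ (B n) ≤ ENNReal.ofReal (f n) := by
    intro n
    have hmark := mul_meas_ge_le_lintegral₀
      (μ := μ) (f := fun x => ((D (n + 1) x)⁻¹) ^ 2)
      (((hDmeas (n + 1)).inv.pow_const 2).aemeasurable) ((((n + 1 : ℕ) : ℝ≥0∞)) ^ 2)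
    have hb := hbound (n + 1) (by omega)
    have hineq : (((n + 1 : ℕ) : ℝ≥0∞)) ^ 2 * μ (B n)
        ≤ ENNReal.ofReal (K * Real.log ((n : ℝ) + 2) ^ c) := by
      refine le_trans hmark (le_trans hb (le_of_eq ?_))
      rw [show (((n + 1 : ℕ) : ℝ) + 1) = (n : ℝ) + 2 by push_cast; ring]
    have hne0 : (((n + 1 : ℕ) : ℝ≥0∞)) ^ 2 ≠ 0 := by positivity
    have hnetop : (((n + 1 : ℕ) : ℝ≥0∞)) ^ 2 ≠ ⊤ := by
      simp [pow_eq_top_iff]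
    have hineq' : μ (B n) * (((n + 1 : ℕ) : ℝ≥0∞)) ^ 2
        ≤ ENNReal.ofReal (K * Real.log ((n : ℝ) + 2) ^ c) := by
      rw [mul_comm]; exact hineq
    have := (ENNReal.le_div_iff_mul_le (Or.inl hne0) (Or.inl hnetop)).mpr hineq'
    refine le_trans this (le_of_eq ?_)
    rw [hfdef]
    have hpow : (((n + 1 : ℕ) : ℝ≥0∞)) ^ 2 = ENNReal.ofReal (((n : ℝ) + 1) ^ 2) := by
      have h1 : ((n + 1 : ℕ) : ℝ≥0∞) = ENNReal.ofReal ((n : ℝ) + 1) := by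
        rw [show ((n : ℝ) + 1) = (((n + 1 : ℕ)) : ℝ) by push_cast; ring,
          ENNReal.ofReal_natCast]
      rw [h1, ← ENNReal.ofReal_pow (by positivity)]
    rw [hpow, ← ENNReal.ofReal_div_of_pos (by positivity)]
  have hsum : (∑' n, μ (B n)) ≠ ⊤ := by
    have h1 : (∑' n, μ (B n)) ≤ ∑' n, ENNReal.ofReal (f n) := ENNReal.tsum_le_tsum hBle
    have h2 : (∑' n, ENNReal.ofReal (f n)) = ENNReal.ofReal (∑' n, f n) :=
      (ENNReal.ofReal_tsum_of_nonneg hf0 (aux_summable K c hK hc)).symm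
    rw [h2] at h1
    exact ne_top_of_le_ne_top ENNReal.ofReal_ne_top h1
  filter_upwards [ae_eventually_notMem hsum] with x hx
  obtain ⟨N, hN⟩ := Filter.eventually_atTop.mp hx
  -- For n ≥ N, D (n+1) x ≥ (n+1)⁻¹
  have hDlow : ∀ n, N ≤ n → (((n + 1 : ℕ) : ℝ≥0∞))⁻¹ ≤ D (n + 1) x := by
    intro n hn
    have hxn := hN n hn
    rw [hBdef] at hxn
    simp only [Set.mem_setOf_eq, not_le] at hxn
    by_contra hcon
    push_neg at hcon
    have h1 : (((n + 1 : ℕ) : ℝ≥0∞)) ≤ (D (n + 1) x)⁻¹ := by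
      have := ENNReal.inv_le_inv' hcon.le
      rwa [inv_inv] at this
    exact absurd (pow_le_pow_left₀ (zero_le) h1 2) (not_le.mpr hxn)
  rw [eq_top_iff]
  have hinj : Function.Injective (fun k : ℕ => k + N) := add_left_injective N
  calc (⊤ : ℝ≥0∞) = ((N : ℝ≥0∞) + 1)⁻¹ * ∑' k : ℕ, ((k : ℝ≥0∞) + 1)⁻¹ := by
        rw [harm_tsum_top, ENNReal.mul_top (by simp)]
    _ = ∑' k : ℕ, ((N : ℝ≥0∞) + 1)⁻¹ * ((k : ℝ≥0∞) + 1)⁻¹ := ENNReal.tsum_mul_left.symm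
    _ ≤ ∑' k : ℕ, D ((k + N) + 1) x := by
        apply ENNReal.tsum_le_tsum
        intro k
        have hnat : (k + N + 1) ≤ (N + 1) * (k + 1) := by nlinarith
        have hcast : (((k + N + 1 : ℕ)) : ℝ≥0∞) ≤ (((N + 1) * (k + 1) : ℕ) : ℝ≥0∞) :=
          Nat.cast_le.mpr hnat
        have hmul : (((N + 1) * (k + 1) : ℕ) : ℝ≥0∞)⁻¹
            = ((N : ℝ≥0∞) + 1)⁻¹ * ((k : ℝ≥0∞) + 1)⁻¹ := by
          push_cast
          rw [ENNReal.mul_inv (Or.inl (by simp)) (Or.inr (by simp))]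
        calc ((N : ℝ≥0∞) + 1)⁻¹ * ((k : ℝ≥0∞) + 1)⁻¹
            = (((N + 1) * (k + 1) : ℕ) : ℝ≥0∞)⁻¹ := hmul.symm
          _ ≤ (((k + N + 1 : ℕ)) : ℝ≥0∞)⁻¹ := ENNReal.inv_le_inv' hcast
          _ ≤ D ((k + N) + 1) x := hDlow (k + N) (by omega)
    _ ≤ ∑' n : ℕ, D (n + 1) x :=
        ENNReal.tsum_comp_le_tsum_of_injective hinj (fun n => D (n + 1) x)
end
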